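/- Let n ≥ 1 and let a₁, …, aₙ > 0 be real numbers. Define g : [0, ∞) → ℝ by g(x) := √((1/n) Σᵢ aᵢ/(aᵢ + x)²) · √((1/n) Σᵢ aᵢ) + √((1/n) Σᵢ (x/(aᵢ + x))²). Then g is nonincreasing on [0, ∞) and g(x) → 1 as x → ∞; consequently g(x) ≥ 1 for all x ≥ 0. -/

import Mathlib

open Finset Filter

noncomputable def Af (n : ℕ) (a : Fin n → ℝ) (x : ℝ) : ℝ :=
  (1 / n : ℝ) * ∑ i, a i / (a i + x) ^ 2

noncomputable def Bf (n : ℕ) (a : Fin n → ℝ) (x : ℝ) : ℝ :=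
  (1 / n : ℝ) * ∑ i, (x / (a i + x)) ^ 2

noncomputable def Sv (n : ℕ) (a : Fin n → ℝ) : ℝ :=
  (1 / n : ℝ) * ∑ i, a i

noncomputable def Df (n : ℕ) (a : Fin n → ℝ) (x : ℝ) : ℝ :=
  (1 / n : ℝ) * ∑ i, 2 * a i / (a i + x) ^ 3

noncomputable def Gf (n : ℕ) (a : Fin n → ℝ) (x : ℝ) : ℝ :=
  Real.sqrt (Af n a x) * Real.sqrt (Sv n a) + Real.sqrt (Bf n a x)

section Aux
variable {n : ℕ} {a : Fin n → ℝ}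

lemma nposR (hn : 1 ≤ n) : (0 : ℝ) < n := by exact_mod_cast hn

lemma finNonempty (hn : 1 ≤ n) : Nonempty (Fin n) := Fin.pos_iff_nonempty.mp hn

lemma Af_pos (hn : 1 ≤ n) (ha : ∀ i, 0 < a i) {x : ℝ} (hx : 0 ≤ x) : 0 < Af n a x := by
  have := finNonempty (n := n) hn
  apply mul_pos (one_div_pos.mpr (nposR hn))
  apply Finset.sum_pos _ Finset.univ_nonempty
  intro i _
  have hi := ha i
  positivity

lemma Sv_pos (hn : 1 ≤ n) (ha : ∀ i, 0 < a i) : 0 < Sv n a := by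
  have := finNonempty (n := n) hn
  apply mul_pos (one_div_pos.mpr (nposR hn))
  exact Finset.sum_pos (fun i _ => ha i) Finset.univ_nonempty

lemma Bf_pos (hn : 1 ≤ n) (ha : ∀ i, 0 < a i) {x : ℝ} (hx : 0 < x) : 0 < Bf n a x := by
  have := finNonempty (n := n) hn
  apply mul_pos (one_div_pos.mpr (nposR hn))
  apply Finset.sum_pos _ Finset.univ_nonempty
  intro i _
  have hi := ha i
  positivity

lemma Bf_nonneg {x : ℝ} : 0 ≤ Bf n a x := by
  unfold Bf
  positivity

lemma Df_pos (hn : 1 ≤ n) (ha : ∀ i, 0 < a i) {x : ℝ} (hx : 0 ≤ x) : 0 < Df n a x := by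
  have := finNonempty (n := n) hn
  apply mul_pos (one_div_pos.mpr (nposR hn))
  apply Finset.sum_pos _ Finset.univ_nonempty
  intro i _
  have hi := ha i
  positivity

lemma hasDerivAt_Af (ha : ∀ i, 0 < a i) {x : ℝ} (hx : 0 ≤ x) :
    HasDerivAt (Af n a) (-(Df n a x)) x := by
  have key : ∀ i : Fin n, HasDerivAt (fun y => a i / (a i + y) ^ 2)
      (-(2 * a i / (a i + x) ^ 3)) x := by
    intro i
    have hpos : 0 < a i + x := by linarith [ha i]
    have h1 : HasDerivAt (fun y : ℝ => a i + y) 1 x := (hasDerivAt_id x).const_add (a i)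
    have h2 : HasDerivAt (fun y : ℝ => (a i + y) ^ 2) (2 * (a i + x) ^ 1 * 1) x := h1.pow 2
    have h3 := (hasDerivAt_const x (a i)).fun_div h2 (pow_ne_zero 2 hpos.ne')
    refine h3.congr_deriv (Eq.symm ?_)
    field_simp
    ring
  have hsum : HasDerivAt (fun y => ∑ i, a i / (a i + y) ^ 2)
      (∑ i, -(2 * a i / (a i + x) ^ 3)) x := HasDerivAt.fun_sum (fun i _ => key i)
  have := hsum.const_mul ((1 / n : ℝ))
  refine this.congr_deriv (Eq.symm ?_)
  unfold Df
  rw [Finset.mul_sum, Finset.mul_sum]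
  simp [neg_mul_comm, mul_neg, Finset.sum_neg_distrib]

lemma hasDerivAt_Bf (ha : ∀ i, 0 < a i) {x : ℝ} (hx : 0 ≤ x) :
    HasDerivAt (Bf n a) (x * Df n a x) x := by
  have key : ∀ i : Fin n, HasDerivAt (fun y => (y / (a i + y)) ^ 2)
      (2 * (x * a i) / (a i + x) ^ 3) x := by
    intro i
    have hpos : 0 < a i + x := by linarith [ha i]
    have h1 : HasDerivAt (fun y : ℝ => a i + y) 1 x := (hasDerivAt_id x).const_add (a i)
    have h2 : HasDerivAt (fun y : ℝ => y / (a i + y))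
        ((1 * (a i + x) - x * 1) / (a i + x) ^ 2) x := (hasDerivAt_id x).div h1 hpos.ne'
    have h3 := h2.fun_pow 2
    refine h3.congr_deriv (Eq.symm ?_)
    simp only [show (2:ℕ) - 1 = 1 from rfl, pow_one, Nat.cast_ofNat]
    field_simp
    ring
  have hsum : HasDerivAt (fun y => ∑ i, (y / (a i + y)) ^ 2)
      (∑ i, 2 * (x * a i) / (a i + x) ^ 3) x := HasDerivAt.fun_sum (fun i _ => key i)
  have := hsum.const_mul ((1 / n : ℝ))
  refine this.congr_deriv (Eq.symm ?_)
  unfold Df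
  rw [Finset.mul_sum, ← Finset.mul_sum, ← mul_assoc, mul_comm x ((1:ℝ)/n), mul_assoc,
    Finset.mul_sum]
  congr 1
  apply Finset.sum_congr rfl
  intro i _
  ring

lemma key_ineq (hn : 1 ≤ n) (ha : ∀ i, 0 < a i) {x : ℝ} (hx : 0 ≤ x) :
    x ^ 2 * Af n a x ≤ Sv n a * Bf n a x := by
  have hnR := nposR (n := n) hn
  have cheb : (n : ℝ) * ∑ i, a i * (x / (a i + x)) ^ 2 ≤
      (∑ i, a i) * ∑ i, (x / (a i + x)) ^ 2 := by
    have h := Antivary.card_mul_sum_le_sum_mul_sum (f := a)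
      (g := fun i => (x / (a i + x)) ^ 2) ?_
    · simpa using h
    · intro i j hij
      by_contra hc
      push_neg at hc
      have h1 : x / (a j + x) ≤ x / (a i + x) :=
        div_le_div_of_nonneg_left hx (by linarith [ha i]) (by linarith)
      have : (x / (a j + x)) ^ 2 ≤ (x / (a i + x)) ^ 2 :=
        pow_le_pow_left₀ (div_nonneg hx (by linarith [ha j])) h1 2
      linarith
  have heq : x ^ 2 * Af n a x = (1 / n : ℝ) * ∑ i, a i * (x / (a i + x)) ^ 2 := by
    unfold Af
    rw [← mul_assoc, mul_comm (x ^ 2) ((1 : ℝ) / n), mul_assoc]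
    congr 1
    rw [Finset.mul_sum]
    apply Finset.sum_congr rfl
    intro i _
    have hpos : (0:ℝ) < a i + x := by linarith [ha i]
    field_simp
  rw [heq]
  unfold Sv Bf
  rw [show (1 / n : ℝ) * ∑ i, a i * (x / (a i + x)) ^ 2
        = ((n : ℝ) * ∑ i, a i * (x / (a i + x)) ^ 2) / ((n : ℝ) * n) from by
      rw [mul_div_mul_left _ _ hnR.ne']; ring,
    show ((1 / n : ℝ) * ∑ i, a i) * ((1 / n : ℝ) * ∑ i, (x / (a i + x)) ^ 2)
        = ((∑ i, a i) * ∑ i, (x / (a i + x)) ^ 2) / ((n : ℝ) * n) from by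
      field_simp]
  exact div_le_div_of_nonneg_right cheb (by positivity)

lemma key_sqrt (hn : 1 ≤ n) (ha : ∀ i, 0 < a i) {x : ℝ} (hx : 0 ≤ x) :
    x * Real.sqrt (Af n a x) ≤ Real.sqrt (Sv n a) * Real.sqrt (Bf n a x) := by
  have h1 : x * Real.sqrt (Af n a x) = Real.sqrt (x ^ 2 * Af n a x) := by
    rw [Real.sqrt_mul (sq_nonneg x), Real.sqrt_sq hx]
  have h2 : Real.sqrt (Sv n a) * Real.sqrt (Bf n a x) = Real.sqrt (Sv n a * Bf n a x) := by
    rw [Real.sqrt_mul (Sv_pos hn ha).le]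
  rw [h1, h2]
  exact Real.sqrt_le_sqrt (key_ineq hn ha hx)

lemma hasDerivAt_Gf (hn : 1 ≤ n) (ha : ∀ i, 0 < a i) {x : ℝ} (hx : 0 < x) :
    HasDerivAt (Gf n a)
      (1 / (2 * Real.sqrt (Af n a x)) * (-(Df n a x)) * Real.sqrt (Sv n a)
        + 1 / (2 * Real.sqrt (Bf n a x)) * (x * Df n a x)) x := by
  have hA := hasDerivAt_Af (n := n) ha hx.le
  have hB := hasDerivAt_Bf (n := n) ha hx.le
  have hApos := Af_pos hn ha hx.le
  have hBpos := Bf_pos hn ha hx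
  have hsA : HasDerivAt (fun y => Real.sqrt (Af n a y))
      (1 / (2 * Real.sqrt (Af n a x)) * (-(Df n a x))) x :=
    (Real.hasDerivAt_sqrt hApos.ne').comp x hA
  have hsB : HasDerivAt (fun y => Real.sqrt (Bf n a y))
      (1 / (2 * Real.sqrt (Bf n a x)) * (x * Df n a x)) x :=
    (Real.hasDerivAt_sqrt hBpos.ne').comp x hB
  exact (hsA.mul_const (Real.sqrt (Sv n a))).add hsB

lemma deriv_Gf_nonpos (hn : 1 ≤ n) (ha : ∀ i, 0 < a i) {x : ℝ} (hx : 0 < x) :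
    1 / (2 * Real.sqrt (Af n a x)) * (-(Df n a x)) * Real.sqrt (Sv n a)
      + 1 / (2 * Real.sqrt (Bf n a x)) * (x * Df n a x) ≤ 0 := by
  have hApos := Af_pos hn ha hx.le
  have hBpos := Bf_pos hn ha hx
  have hDpos := Df_pos hn ha hx.le
  have hsA : 0 < Real.sqrt (Af n a x) := Real.sqrt_pos.mpr hApos
  have hsB : 0 < Real.sqrt (Bf n a x) := Real.sqrt_pos.mpr hBpos
  have hkey := key_sqrt hn ha hx.le
  have heq : 1 / (2 * Real.sqrt (Af n a x)) * (-(Df n a x)) * Real.sqrt (Sv n a)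
      + 1 / (2 * Real.sqrt (Bf n a x)) * (x * Df n a x)
      = Df n a x * (x * Real.sqrt (Af n a x) - Real.sqrt (Sv n a) * Real.sqrt (Bf n a x))
        / (2 * Real.sqrt (Af n a x) * Real.sqrt (Bf n a x)) := by
    field_simp
    ring
  rw [heq]
  apply div_nonpos_of_nonpos_of_nonneg
  · exact mul_nonpos_of_nonneg_of_nonpos hDpos.le (by linarith)
  · positivity

lemma continuousOn_Gf (hn : 1 ≤ n) (ha : ∀ i, 0 < a i) :
    ContinuousOn (Gf n a) (Set.Ici 0) := by
  have hden : ∀ i : Fin n, ∀ x ∈ Set.Ici (0:ℝ), ((a i + x) ^ 2 : ℝ) ≠ 0 := by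
    intro i x hx
    have : (0:ℝ) < a i + x := by have := ha i; simp only [Set.mem_Ici] at hx; linarith
    positivity
  have hA : ContinuousOn (Af n a) (Set.Ici 0) := by
    apply ContinuousOn.mul continuousOn_const
    apply continuousOn_finset_sum
    intro i _
    exact ContinuousOn.div continuousOn_const
      (((continuous_const.add continuous_id).pow 2).continuousOn) (hden i)
  have hB : ContinuousOn (Bf n a) (Set.Ici 0) := by
    apply ContinuousOn.mul continuousOn_const
    apply continuousOn_finset_sum
    intro i _
    apply ContinuousOn.pow
    apply ContinuousOn.div continuous_id.continuousOn
      ((continuous_const.add continuous_id).continuousOn)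
    intro x hx
    have := ha i; simp only [Set.mem_Ici] at hx
    intro h; simp at h; linarith
  exact ((Real.continuous_sqrt.comp_continuousOn hA).mul continuousOn_const).add
    (Real.continuous_sqrt.comp_continuousOn hB)

lemma antitoneOn_Gf (hn : 1 ≤ n) (ha : ∀ i, 0 < a i) :
    AntitoneOn (Gf n a) (Set.Ici 0) := by
  apply antitoneOn_of_deriv_nonpos (convex_Ici 0) (continuousOn_Gf hn ha)
  · intro x hx
    rw [interior_Ici] at hx
    exact (hasDerivAt_Gf hn ha hx).differentiableAt.differentiableWithinAt
  · intro x hx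
    rw [interior_Ici] at hx
    rw [(hasDerivAt_Gf hn ha hx).deriv]
    exact deriv_Gf_nonpos hn ha hx

lemma tendsto_Gf (hn : 1 ≤ n) (ha : ∀ i, 0 < a i) :
    Tendsto (Gf n a) atTop (nhds 1) := by
  have hnR := nposR (n := n) hn
  have hlin : ∀ i : Fin n, Tendsto (fun x : ℝ => a i + x) atTop atTop :=
    fun i => tendsto_atTop_add_const_left _ _ tendsto_id
  have hA : Tendsto (Af n a) atTop (nhds 0) := by
    have : Tendsto (fun x => ∑ i, a i / (a i + x) ^ 2) atTop (nhds (∑ _i : Fin n, (0:ℝ))) := by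
      apply tendsto_finset_sum
      intro i _
      exact tendsto_const_nhds.div_atTop ((tendsto_pow_atTop two_ne_zero).comp (hlin i))
    show Tendsto (fun x => (1 / n : ℝ) * ∑ i, a i / (a i + x) ^ 2) atTop (nhds 0)
    simpa using this.const_mul ((1 / n : ℝ))
  have hB : Tendsto (Bf n a) atTop (nhds 1) := by
    have hterm : ∀ i : Fin n, Tendsto (fun x : ℝ => (x / (a i + x)) ^ 2) atTop (nhds 1) := by
      intro i
      have h1 : Tendsto (fun x : ℝ => 1 - a i / (a i + x)) atTop (nhds 1) := by
        have := (tendsto_const_nhds (x := a i) (f := atTop)).div_atTop (hlin i)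
        have h2 := (tendsto_const_nhds (x := (1:ℝ)) (f := atTop)).sub this
        simpa using h2
      have h2 : Tendsto (fun x : ℝ => x / (a i + x)) atTop (nhds 1) := by
        apply h1.congr'
        filter_upwards [eventually_ge_atTop (1:ℝ)] with x hx
        have hpos : (0:ℝ) < a i + x := by have := ha i; linarith
        field_simp
        ring
      have := h2.pow 2
      simpa using this
    have : Tendsto (fun x => ∑ i, (x / (a i + x)) ^ 2) atTop (nhds (∑ _i : Fin n, (1:ℝ))) :=
      tendsto_finset_sum _ (fun i _ => hterm i)
    have h2 := this.const_mul ((1 / n : ℝ))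
    have h3 : (1 / n : ℝ) * (∑ _i : Fin n, (1:ℝ)) = 1 := by
      simp [Finset.sum_const, Finset.card_univ]
      field_simp
    rw [h3] at h2
    exact h2.congr (fun x => rfl)
  have hsA : Tendsto (fun x => Real.sqrt (Af n a x)) atTop (nhds 0) := by
    have := (Real.continuous_sqrt.tendsto 0).comp hA
    simpa [Function.comp_def] using this
  have hsB : Tendsto (fun x => Real.sqrt (Bf n a x)) atTop (nhds 1) := by
    have := (Real.continuous_sqrt.tendsto 1).comp hB
    simpa [Function.comp_def] using this
  have := (hsA.mul_const (Real.sqrt (Sv n a))).add hsB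
  rw [zero_mul, zero_add] at this
  exact this

end Aux

theorem stmt3 (n : ℕ) (hn : 1 ≤ n) (a : Fin n → ℝ) (ha : ∀ i, 0 < a i)
    (g : ℝ → ℝ)
    (hg : ∀ x, g x =
      Real.sqrt ((1 / n : ℝ) * ∑ i, a i / (a i + x) ^ 2) *
          Real.sqrt ((1 / n : ℝ) * ∑ i, a i)
        + Real.sqrt ((1 / n : ℝ) * ∑ i, (x / (a i + x)) ^ 2)) :
    AntitoneOn g (Set.Ici 0) ∧ Tendsto g atTop (nhds 1) ∧ ∀ x, 0 ≤ x → 1 ≤ g x := by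
  have hgfun : g = Gf n a := by
    funext x
    rw [hg x]
    rfl
  rw [hgfun]
  have hanti := antitoneOn_Gf hn ha
  have htend := tendsto_Gf hn ha
  refine ⟨hanti, htend, ?_⟩
  intro x hx
  apply le_of_tendsto htend
  filter_upwards [eventually_ge_atTop x] with y hy
  exact hanti hx (le_trans hx hy) hy
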